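/- Let Y be a finite set, (n_i)_{i∈Y} a family of positive integers, (a_i)_{i∈Y} a family of positive real numbers, and let C, D ⊆ Y satisfy (∏_{i∈D}(x^{n_i}-1))(∏_{i∈Y∖D}(x^{n_i}+a_i)) = (∏_{i∈C}(x^{n_i}-1))(∏_{i∈Y∖C}(x^{n_i}+a_i)) as real polynomials. Then there exists a bijection σ: C → D with n_i = n_{σ(i)} and a_i = a_{σ(i)} for all i ∈ C. -/

import Mathlib

open Polynomial

private lemma stmt2_int_side (M k : ℕ) (m : ℤ) (hM : 0 < M) (hk : 0 < k) (hkM : k ≤ M)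
    (h : (k:ℤ) = 2*m*M) : False := by
  rcases le_or_gt m 0 with h'|h'
  · nlinarith [Int.ofNat_lt.2 hk, Int.ofNat_le.2 hkM, Int.ofNat_lt.2 hM]
  · nlinarith [Int.ofNat_lt.2 hk, Int.ofNat_le.2 hkM, Int.ofNat_lt.2 hM]

private lemma stmt2_z_ne_one (α : ℝ) (hα : 0 < α) (M : ℕ) (hM : 0 < M) (k : ℕ) (hk : 0 < k)
    (hkM : k ≤ M) :
    (Complex.exp ((Real.log α + Real.pi * Complex.I) / M)) ^ k ≠ 1 := by
  intro h1
  rw [← Complex.exp_nat_mul, Complex.exp_eq_one_iff] at h1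
  obtain ⟨m, hm⟩ := h1
  have hM' : (M : ℂ) ≠ 0 := Nat.cast_ne_zero.2 hM.ne'
  rw [mul_div_assoc', div_eq_iff hM'] at hm
  have him := congrArg Complex.im hm
  simp [Complex.mul_im, Complex.mul_re] at him
  have h2 : (k:ℝ) * Real.pi = ((2*m*M : ℤ):ℝ) * Real.pi := by push_cast; linarith
  have h3 : (k:ℝ) = ((2*m*M : ℤ):ℝ) := mul_right_cancel₀ Real.pi_ne_zero h2
  have h4 : (k:ℤ) = 2*m*M := by exact_mod_cast h3
  exact stmt2_int_side M k m hM hk hkM h4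

private lemma stmt2_int_side2 (M k : ℕ) (m : ℤ) (hM : 0 < M) (hk : 0 < k) (hkM : k ≤ M)
    (h : (k:ℤ) = (1+2*m)*M) : m = 0 := by
  rcases lt_trichotomy m 0 with h'|h'|h'
  · exfalso
    have h1 : 1 + 2*m ≤ -1 := by omega
    nlinarith [Int.ofNat_lt.2 hk, Int.ofNat_lt.2 hM]
  · exact h'
  · exfalso
    have h1 : 3 ≤ 1 + 2*m := by omega
    nlinarith [Int.ofNat_lt.2 hk, Int.ofNat_le.2 hkM, Int.ofNat_lt.2 hM]

private lemma stmt2_z_eq_neg (α : ℝ) (hα : 0 < α) (M : ℕ) (hM : 0 < M) (k : ℕ) (hk : 0 < k)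
    (hkM : k ≤ M) (β : ℝ) (hβ : 0 < β)
    (h1 : (Complex.exp ((Real.log α + Real.pi * Complex.I) / M)) ^ k = -(β:ℂ)) :
    k = M ∧ β = α := by
  have hMβ : -(β:ℂ) = Complex.exp ((Real.log β : ℂ) + Real.pi * Complex.I) := by
    rw [Complex.exp_add, Complex.exp_pi_mul_I, ← Complex.ofReal_exp, Real.exp_log hβ]; ring
  rw [← Complex.exp_nat_mul, hMβ, Complex.exp_eq_exp_iff_exists_int] at h1
  obtain ⟨m, hm⟩ := h1
  have hM' : (M : ℂ) ≠ 0 := Nat.cast_ne_zero.2 hM.ne'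
  rw [mul_div_assoc', div_eq_iff hM'] at hm
  have him := congrArg Complex.im hm
  have hre := congrArg Complex.re hm
  simp [Complex.mul_im, Complex.mul_re, Complex.add_im, Complex.add_re] at him hre
  have h2 : (k:ℝ) * Real.pi = (((1+2*m)*M : ℤ):ℝ) * Real.pi := by push_cast; linarith
  have h3 : (k:ℤ) = (1+2*m)*M := by exact_mod_cast mul_right_cancel₀ Real.pi_ne_zero h2
  have hm0 : m = 0 := stmt2_int_side2 M k m hM hk hkM h3
  subst hm0
  have hkM' : k = M := by omega
  subst hkM'
  refine ⟨rfl, ?_⟩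
  have hlog : Real.log β = Real.log α := by
    have hMR : (k:ℝ) ≠ 0 := Nat.cast_ne_zero.2 hk.ne'
    have h5 : (k:ℝ) * Real.log β = (k:ℝ) * Real.log α := by linarith
    exact (mul_left_cancel₀ hMR h5)
  calc β = Real.exp (Real.log β) := (Real.exp_log hβ).symm
    _ = Real.exp (Real.log α) := by rw [hlog]
    _ = α := Real.exp_log hα

private lemma stmt2_zpow_M (α : ℝ) (hα : 0 < α) (M : ℕ) (hM : 0 < M) :
    (Complex.exp ((Real.log α + Real.pi * Complex.I) / M)) ^ M = -(α : ℂ) := by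
  rw [← Complex.exp_nat_mul]
  have hM' : (M : ℂ) ≠ 0 := Nat.cast_ne_zero.2 hM.ne'
  rw [mul_div_cancel₀ _ hM', Complex.exp_add, Complex.exp_pi_mul_I, ← Complex.ofReal_exp,
    Real.exp_log hα]
  ring

private lemma stmt2_extract {Y : Type*} [DecidableEq Y]
    (n : Y → ℕ) (a : Y → ℝ) (hn : ∀ i, 0 < n i) (ha : ∀ i, 0 < a i)
    (S T : Finset Y) (hS : S.Nonempty)
    (h : ((∏ i ∈ T, (X ^ n i - 1)) * ∏ i ∈ S, (X ^ n i + C (a i)) : ℝ[X])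
       = (∏ i ∈ S, (X ^ n i - 1)) * ∏ i ∈ T, (X ^ n i + C (a i))) :
    ∃ i ∈ S, ∃ j ∈ T, n i = n j ∧ a i = a j := by
  have hU : (S ∪ T).Nonempty := hS.mono Finset.subset_union_left
  obtain ⟨i₀, hi₀U, hmax⟩ := Finset.exists_max_image (S ∪ T) n hU
  set M := n i₀ with hM
  set α := a i₀ with hα
  set z : ℂ := Complex.exp ((Real.log α + Real.pi * Complex.I) / M) with hz
  have hzM : z ^ M = -(α:ℂ) := stmt2_zpow_M α (ha i₀) M (hn i₀)
  have h2 : ((∏ i ∈ T, (z ^ n i - 1)) * ∏ i ∈ S, (z ^ n i + (a i : ℂ)))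
       = (∏ i ∈ S, (z ^ n i - 1)) * ∏ i ∈ T, (z ^ n i + (a i : ℂ)) := by
    have := congrArg (Polynomial.aeval z) h
    simpa [map_prod, Polynomial.aeval_C, Complex.coe_algebraMap] using this
  have key : ∀ A B : Finset Y, A ⊆ S ∪ T → B ⊆ S ∪ T →
      ((∏ i ∈ A, (z ^ n i - 1)) * ∏ i ∈ B, (z ^ n i + (a i : ℂ))) = 0 →
      ∃ j ∈ B, n j = M ∧ a j = α := by
    intro A B hA hB h0
    rcases mul_eq_zero.1 h0 with h0 | h0
    · exfalso
      obtain ⟨u, huA, hu⟩ := Finset.prod_eq_zero_iff.1 h0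
      have h1 : z ^ n u = 1 := by linear_combination hu
      exact stmt2_z_ne_one α (ha i₀) M (hn i₀) (n u) (hn u) (hmax u (hA huA)) h1
    · obtain ⟨j, hjB, hj⟩ := Finset.prod_eq_zero_iff.1 h0
      have h1 : z ^ n j = -((a j : ℝ) : ℂ) := by linear_combination hj
      obtain ⟨h3, h4⟩ := stmt2_z_eq_neg α (ha i₀) M (hn i₀) (n j) (hn j) (hmax j (hB hjB))
        (a j) (ha j) h1
      exact ⟨j, hjB, h3, h4⟩
  rcases Finset.mem_union.1 hi₀U with hi₀ | hi₀
  · have h0 : ((∏ i ∈ T, (z ^ n i - 1)) * ∏ i ∈ S, (z ^ n i + (a i : ℂ))) = 0 := by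
      apply mul_eq_zero_of_right
      exact Finset.prod_eq_zero hi₀ (by rw [hzM]; ring)
    obtain ⟨j, hjT, h3, h4⟩ := key S T Finset.subset_union_left Finset.subset_union_right (h2 ▸ h0)
    exact ⟨i₀, hi₀, j, hjT, h3.symm, h4.symm⟩
  · have h0 : ((∏ i ∈ S, (z ^ n i - 1)) * ∏ i ∈ T, (z ^ n i + (a i : ℂ))) = 0 := by
      apply mul_eq_zero_of_right
      exact Finset.prod_eq_zero hi₀ (by rw [hzM]; ring)
    obtain ⟨i, hiS, h3, h4⟩ := key T S Finset.subset_union_right Finset.subset_union_left (h2.symm ▸ h0)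
    exact ⟨i, hiS, i₀, hi₀, by rw [h3], by rw [h4]⟩

private lemma stmt2_Xpow_sub_one_ne {m : ℕ} (hm : 0 < m) : (X ^ m - 1 : ℝ[X]) ≠ 0 := by
  intro h
  have := congrArg (Polynomial.eval 0) h
  simp [zero_pow hm.ne'] at this

private lemma stmt2_step {Y : Type*} [Fintype Y] [DecidableEq Y]
    (n : Y → ℕ) (a : Y → ℝ) (hn : ∀ i, 0 < n i)
    {C D : Finset Y} {i j : Y} (hi : i ∈ C) (hj : j ∈ D)
    (hnij : n i = n j) (haij : a i = a j)
    (h : ((∏ i ∈ D, (X ^ n i - 1)) * ∏ i ∈ Dᶜ, (X ^ n i + Polynomial.C (a i)) : ℝ[X])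
       = (∏ i ∈ C, (X ^ n i - 1)) * ∏ i ∈ Cᶜ, (X ^ n i + Polynomial.C (a i))) :
    ((∏ k ∈ D.erase j, (X ^ n k - 1)) * ∏ k ∈ (D.erase j)ᶜ, (X ^ n k + Polynomial.C (a k)) : ℝ[X])
       = (∏ k ∈ C.erase i, (X ^ n k - 1)) * ∏ k ∈ (C.erase i)ᶜ, (X ^ n k + Polynomial.C (a k)) := by
  apply mul_left_cancel₀ (stmt2_Xpow_sub_one_ne (hn i) : (X ^ n i - 1 : ℝ[X]) ≠ 0)
  have hD : ∏ k ∈ D, (X ^ n k - 1 : ℝ[X]) = (X ^ n j - 1) * ∏ k ∈ D.erase j, (X ^ n k - 1) :=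
    (Finset.mul_prod_erase D _ hj).symm
  have hC : ∏ k ∈ C, (X ^ n k - 1 : ℝ[X]) = (X ^ n i - 1) * ∏ k ∈ C.erase i, (X ^ n k - 1) :=
    (Finset.mul_prod_erase C _ hi).symm
  have hDc : ∏ k ∈ (D.erase j)ᶜ, (X ^ n k + Polynomial.C (a k) : ℝ[X])
      = (X ^ n j + Polynomial.C (a j)) * ∏ k ∈ Dᶜ, (X ^ n k + Polynomial.C (a k)) := by
    rw [Finset.compl_erase, Finset.prod_insert (by simp [hj])]
  have hCc : ∏ k ∈ (C.erase i)ᶜ, (X ^ n k + Polynomial.C (a k) : ℝ[X])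
      = (X ^ n i + Polynomial.C (a i)) * ∏ k ∈ Cᶜ, (X ^ n k + Polynomial.C (a k)) := by
    rw [Finset.compl_erase, Finset.prod_insert (by simp [hi])]
  calc (X ^ n i - 1 : ℝ[X]) * ((∏ k ∈ D.erase j, (X ^ n k - 1)) * ∏ k ∈ (D.erase j)ᶜ, (X ^ n k + Polynomial.C (a k)))
      = (X ^ n i + Polynomial.C (a i)) * ((∏ k ∈ D, (X ^ n k - 1)) * ∏ k ∈ Dᶜ, (X ^ n k + Polynomial.C (a k))) := by
        rw [hD, hDc, hnij, haij]; ring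
    _ = (X ^ n i + Polynomial.C (a i)) * ((∏ k ∈ C, (X ^ n k - 1)) * ∏ k ∈ Cᶜ, (X ^ n k + Polynomial.C (a k))) := by rw [h]
    _ = (X ^ n i - 1) * ((∏ k ∈ C.erase i, (X ^ n k - 1)) * ∏ k ∈ (C.erase i)ᶜ, (X ^ n k + Polynomial.C (a k))) := by
        rw [hC, hCc]; ring

private lemma stmt2_empty_case {Y : Type*} [Fintype Y] [DecidableEq Y]
    (n : Y → ℕ) (a : Y → ℝ) (ha : ∀ i, 0 < a i)
    {D : Finset Y}
    (h : ((∏ i ∈ D, (X ^ n i - 1)) * ∏ i ∈ Dᶜ, (X ^ n i + Polynomial.C (a i)) : ℝ[X])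
       = (∏ i ∈ (∅ : Finset Y), (X ^ n i - 1)) * ∏ i ∈ (∅ : Finset Y)ᶜ, (X ^ n i + Polynomial.C (a i))) :
    D = ∅ := by
  by_contra hD
  obtain ⟨j, hj⟩ := Finset.nonempty_iff_ne_empty.2 hD
  have := congrArg (Polynomial.eval 1) h
  simp [Polynomial.eval_prod] at this
  rw [zero_pow (Finset.card_pos.2 ⟨j, hj⟩).ne', zero_mul] at this
  have hpos : (0:ℝ) < ∏ x : Y, (1 + a x) := Finset.prod_pos (fun i _ => by linarith [ha i])
  rw [← this] at hpos
  exact lt_irrefl _ hpos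

private lemma stmt2_extend_equiv {Y : Type*} [DecidableEq Y] (n : Y → ℕ) (a : Y → ℝ)
    {C D : Finset Y} {i j : Y} (hi : i ∈ C) (hj : j ∈ D)
    (hnij : n i = n j) (haij : a i = a j)
    (σ' : {x // x ∈ C.erase i} ≃ {x // x ∈ D.erase j})
    (hσ' : ∀ x : {x // x ∈ C.erase i}, n x.1 = n (σ' x).1 ∧ a x.1 = a (σ' x).1) :
    ∃ σ : {x // x ∈ C} ≃ {x // x ∈ D},
      ∀ x : {x // x ∈ C}, n x.1 = n (σ x).1 ∧ a x.1 = a (σ x).1 := by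
  have hcard : C.card = D.card := by
    have h1 := Fintype.card_congr σ'
    simp only [Fintype.card_coe] at h1
    have h2 := Finset.card_erase_of_mem hi
    have h3 := Finset.card_erase_of_mem hj
    have h4 := Finset.card_pos.2 ⟨i, hi⟩
    have h5 := Finset.card_pos.2 ⟨j, hj⟩
    omega
  set f : {x // x ∈ C} → {x // x ∈ D} := fun x =>
    if h : x.1 = i then ⟨j, hj⟩
    else ⟨(σ' ⟨x.1, Finset.mem_erase.2 ⟨h, x.2⟩⟩).1,
      Finset.mem_of_mem_erase (σ' ⟨x.1, Finset.mem_erase.2 ⟨h, x.2⟩⟩).2⟩ with hf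
  have hinj : Function.Injective f := by
    intro x y hxy
    by_cases hx : x.1 = i <;> by_cases hy : y.1 = i
    · exact Subtype.ext (hx.trans hy.symm)
    · exfalso
      simp only [hf, dif_pos hx, dif_neg hy, Subtype.mk.injEq] at hxy
      have := (Finset.mem_erase.1 (σ' ⟨y.1, Finset.mem_erase.2 ⟨hy, y.2⟩⟩).2).1
      exact this hxy.symm
    · exfalso
      simp only [hf, dif_pos hy, dif_neg hx, Subtype.mk.injEq] at hxy
      have := (Finset.mem_erase.1 (σ' ⟨x.1, Finset.mem_erase.2 ⟨hx, x.2⟩⟩).2).1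
      exact this hxy
    · simp only [hf, dif_neg hx, dif_neg hy, Subtype.mk.injEq] at hxy
      have h2 := σ'.injective (Subtype.ext hxy)
      have h3 : x.1 = y.1 := congrArg (fun z : {x // x ∈ C.erase i} => z.1) h2
      exact Subtype.ext h3
  have hbij : Function.Bijective f :=
    (Fintype.bijective_iff_injective_and_card f).2 ⟨hinj, by simp [Fintype.card_coe, hcard]⟩
  refine ⟨Equiv.ofBijective f hbij, ?_⟩
  intro x
  show n x.1 = n (f x).1 ∧ a x.1 = a (f x).1
  by_cases hx : x.1 = i
  · simp only [hf, dif_pos hx, hx]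
    exact ⟨hnij, haij⟩
  · simp only [hf, dif_neg hx]
    exact hσ' ⟨x.1, Finset.mem_erase.2 ⟨hx, x.2⟩⟩

private lemma stmt2_disjoint_reduce {Y : Type*} [Fintype Y] [DecidableEq Y]
    (n : Y → ℕ) (a : Y → ℝ) (ha : ∀ i, 0 < a i)
    {C D : Finset Y} (hCD : Disjoint C D)
    (h : ((∏ i ∈ D, (X ^ n i - 1)) * ∏ i ∈ Dᶜ, (X ^ n i + Polynomial.C (a i)) : ℝ[X])
       = (∏ i ∈ C, (X ^ n i - 1)) * ∏ i ∈ Cᶜ, (X ^ n i + Polynomial.C (a i))) :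
    ((∏ i ∈ D, (X ^ n i - 1)) * ∏ i ∈ C, (X ^ n i + Polynomial.C (a i)) : ℝ[X])
       = (∏ i ∈ C, (X ^ n i - 1)) * ∏ i ∈ D, (X ^ n i + Polynomial.C (a i)) := by
  have hD : Dᶜ = C ∪ (Cᶜ ∩ Dᶜ) := by
    ext x
    simp only [Finset.mem_compl, Finset.mem_union, Finset.mem_inter]
    constructor
    · intro hx
      by_cases hc : x ∈ C
      · exact Or.inl hc
      · exact Or.inr ⟨hc, hx⟩
    · rintro (hx | ⟨-, hx⟩)
      · exact Finset.disjoint_left.1 hCD hx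
      · exact hx
  have hC : Cᶜ = D ∪ (Cᶜ ∩ Dᶜ) := by
    ext x
    simp only [Finset.mem_compl, Finset.mem_union, Finset.mem_inter]
    constructor
    · intro hx
      by_cases hd : x ∈ D
      · exact Or.inl hd
      · exact Or.inr ⟨hx, hd⟩
    · rintro (hx | ⟨hx, -⟩)
      · exact Finset.disjoint_right.1 hCD hx
      · exact hx
  have hdC : Disjoint C (Cᶜ ∩ Dᶜ) := by
    apply Finset.disjoint_left.2
    intro x hx hx'
    exact (Finset.mem_compl.1 (Finset.mem_inter.1 hx').1) hx
  have hdD : Disjoint D (Cᶜ ∩ Dᶜ) := by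
    apply Finset.disjoint_left.2
    intro x hx hx'
    exact (Finset.mem_compl.1 (Finset.mem_inter.1 hx').2) hx
  have hprodD : (∏ i ∈ Dᶜ, (X ^ n i + Polynomial.C (a i)) : ℝ[X])
      = (∏ i ∈ C, (X ^ n i + Polynomial.C (a i))) * ∏ i ∈ Cᶜ ∩ Dᶜ, (X ^ n i + Polynomial.C (a i)) := by
    conv_lhs => rw [hD]
    rw [Finset.prod_union hdC]
  have hprodC : (∏ i ∈ Cᶜ, (X ^ n i + Polynomial.C (a i)) : ℝ[X])
      = (∏ i ∈ D, (X ^ n i + Polynomial.C (a i))) * ∏ i ∈ Cᶜ ∩ Dᶜ, (X ^ n i + Polynomial.C (a i)) := by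
    conv_lhs => rw [hC]
    rw [Finset.prod_union hdD]
  rw [hprodD, hprodC] at h
  have hE : (∏ i ∈ Cᶜ ∩ Dᶜ, (X ^ n i + Polynomial.C (a i)) : ℝ[X]) ≠ 0 := by
    rw [Finset.prod_ne_zero_iff]
    intro i _ hzero
    have := congrArg (Polynomial.eval 1) hzero
    simp at this
    nlinarith [ha i]
  apply mul_right_cancel₀ hE
  calc ((∏ i ∈ D, (X ^ n i - 1)) * ∏ i ∈ C, (X ^ n i + Polynomial.C (a i))) * ∏ i ∈ Cᶜ ∩ Dᶜ, (X ^ n i + Polynomial.C (a i))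
      = (∏ i ∈ D, (X ^ n i - 1)) * ((∏ i ∈ C, (X ^ n i + Polynomial.C (a i))) * ∏ i ∈ Cᶜ ∩ Dᶜ, (X ^ n i + Polynomial.C (a i))) := by ring
    _ = (∏ i ∈ C, (X ^ n i - 1)) * ((∏ i ∈ D, (X ^ n i + Polynomial.C (a i))) * ∏ i ∈ Cᶜ ∩ Dᶜ, (X ^ n i + Polynomial.C (a i))) := h
    _ = ((∏ i ∈ C, (X ^ n i - 1)) * ∏ i ∈ D, (X ^ n i + Polynomial.C (a i))) * ∏ i ∈ Cᶜ ∩ Dᶜ, (X ^ n i + Polynomial.C (a i)) := by ring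

private lemma stmt2_main {Y : Type*} [Fintype Y] [DecidableEq Y]
    (n : Y → ℕ) (a : Y → ℝ) (hn : ∀ i, 0 < n i) (ha : ∀ i, 0 < a i) :
    ∀ (k : ℕ) (C D : Finset Y), C.card = k →
    (((∏ i ∈ D, (X ^ n i - 1)) * ∏ i ∈ Dᶜ, (X ^ n i + Polynomial.C (a i)) : ℝ[X])
       = (∏ i ∈ C, (X ^ n i - 1)) * ∏ i ∈ Cᶜ, (X ^ n i + Polynomial.C (a i))) →
    ∃ σ : {x // x ∈ C} ≃ {x // x ∈ D},
      ∀ x : {x // x ∈ C}, n x.1 = n (σ x).1 ∧ a x.1 = a (σ x).1 := by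
  intro k
  induction k with
  | zero =>
    intro C D hcard h
    have hC : C = ∅ := Finset.card_eq_zero.1 hcard
    subst hC
    have hD : D = ∅ := stmt2_empty_case n a ha h
    subst hD
    exact ⟨Equiv.refl _, fun x => ⟨rfl, rfl⟩⟩
  | succ k ih =>
    intro C D hcard h
    have hCne : C.Nonempty := Finset.card_pos.1 (by omega)
    have hpair : ∃ i ∈ C, ∃ j ∈ D, n i = n j ∧ a i = a j := by
      by_cases hint : (C ∩ D).Nonempty
      · obtain ⟨i, hi⟩ := hint
        rw [Finset.mem_inter] at hi
        exact ⟨i, hi.1, i, hi.2, rfl, rfl⟩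
      · have hCD : Disjoint C D := by
          rw [Finset.disjoint_iff_inter_eq_empty]
          exact Finset.not_nonempty_iff_eq_empty.1 hint
        exact stmt2_extract n a hn ha C D hCne (stmt2_disjoint_reduce n a ha hCD h)
    obtain ⟨i, hi, j, hj, hnij, haij⟩ := hpair
    have h' := stmt2_step n a hn hi hj hnij haij h
    have hcard' : (C.erase i).card = k := by
      rw [Finset.card_erase_of_mem hi, hcard]
      omega
    obtain ⟨σ', hσ'⟩ := ih (C.erase i) (D.erase j) hcard' h'
    exact stmt2_extend_equiv n a hi hj hnij haij σ' hσ'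

theorem stmt2 {Y : Type*} [Fintype Y] [DecidableEq Y]
    (n : Y → ℕ) (a : Y → ℝ) (hn : ∀ i, 0 < n i) (ha : ∀ i, 0 < a i)
    (C D : Finset Y)
    (h : ((∏ i ∈ D, (Polynomial.X ^ n i - 1)) *
          (∏ i ∈ Dᶜ, (Polynomial.X ^ n i + Polynomial.C (a i))) : Polynomial ℝ)
       = (∏ i ∈ C, (Polynomial.X ^ n i - 1)) *
          (∏ i ∈ Cᶜ, (Polynomial.X ^ n i + Polynomial.C (a i)))) :
    ∃ σ : {i // i ∈ C} ≃ {i // i ∈ D},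
      ∀ i : {i // i ∈ C}, n i.1 = n (σ i).1 ∧ a i.1 = a (σ i).1 := by
  exact stmt2_main n a hn ha C.card C D rfl h
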